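/- Let λ be a partition of n and let q ≥ 2 be an integer. Then D⁻_λ(q) ≤ D_λ(q), where D⁻_λ(q) = |(−q)^{a(λ)} · Π_{i=1}^n ((−q)^i − 1) / Π_{(i,j)∈λ} ((−q)^{h_{i,j}} − 1)|. That is, the degree of the unipotent character of GL_n(q) indexed by λ is at least as big as the degree of the unipotent character of GU_n(q) indexed by λ. -/

import Mathlib

open scoped Classical

/-- The hook length of a cell `c` in a Young diagram `Y`: the number of cells `(i',j')` of `Y`
with `i' ≥ i`, `j' ≥ j` and `i' = i` or `j' = j`, where `c = (i,j)` (0-indexed). -/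
def hookLength (Y : YoungDiagram) (c : ℕ × ℕ) : ℕ :=
  (Y.cells.filter fun d => c.1 ≤ d.1 ∧ c.2 ≤ d.2 ∧ (d.1 = c.1 ∨ d.2 = c.2)).card

/-- The statistic `a(λ) = ∑ᵢ (i-1)·aᵢ` of a partition (rows of the diagram are 0-indexed,
so this is the sum of the row indices of all cells). -/
def aStat (Y : YoungDiagram) : ℕ := ∑ c ∈ Y.cells, c.1

/-- The degree `D_λ(q)` of the unipotent character of `GL_n(q)` indexed by the partition `λ`
(quantized hook formula). -/
noncomputable def Dq (Y : YoungDiagram) (q : ℝ) : ℝ :=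
  q ^ aStat Y * (∏ i ∈ Finset.range Y.card, (q ^ (i + 1) - 1)) /
    ∏ c ∈ Y.cells, (q ^ hookLength Y c - 1)

/-- The degree `D⁻_λ(q)` of the unipotent character of `GU_n(q)` indexed by the partition `λ`,
obtained from the quantized hook formula by replacing `q` with `-q` and adjusting the sign. -/
noncomputable def Dqminus (Y : YoungDiagram) (q : ℝ) : ℝ :=
  |(-q) ^ aStat Y * (∏ i ∈ Finset.range Y.card, ((-q) ^ (i + 1) - 1)) /
    ∏ c ∈ Y.cells, ((-q) ^ hookLength Y c - 1)|

open Finset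



/-- `F q k = (q^k - (-1)^k)/(q^k - 1)`, the correction factor for hook `k`. -/
noncomputable def Ff (q : ℝ) (k : ℕ) : ℝ := (q ^ k - (-1) ^ k) / (q ^ k - 1)

lemma one_lt_qpow {q : ℝ} (hq : 2 ≤ q) {k : ℕ} (hk : 1 ≤ k) : 1 < q ^ k := by
  have : (1:ℝ) < q := by linarith
  exact one_lt_pow₀ this (by omega)

lemma Ff_one_le {q : ℝ} (hq : 2 ≤ q) {k : ℕ} (hk : 1 ≤ k) : 1 ≤ Ff q k := by
  have h1 : (0:ℝ) < q ^ k - 1 := by have := one_lt_qpow hq hk; linarith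
  have h2 : ((-1:ℝ)) ^ k ≤ 1 := by
    rcases Nat.even_or_odd k with h | h
    · rw [h.neg_one_pow]
    · rw [h.neg_one_pow]; norm_num
  rw [Ff, le_div_iff₀ h1]; linarith

lemma Ff_even {q : ℝ} (hq : 2 ≤ q) {k : ℕ} (hk : 1 ≤ k) (he : Even k) : Ff q k = 1 := by
  have h1 : (0:ℝ) < q ^ k - 1 := by have := one_lt_qpow hq hk; linarith
  rw [Ff, he.neg_one_pow, div_self (by linarith)]

lemma Ff_le {q : ℝ} (hq : 2 ≤ q) {k : ℕ} (hk : 4 ≤ k) : Ff q k ≤ 1 + (32/15) / q ^ k := by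
  have h16 : (16:ℝ) ≤ q ^ k := by
    calc (16:ℝ) = 2 ^ 4 := by norm_num
    _ ≤ q ^ 4 := by gcongr
    _ ≤ q ^ k := by apply pow_le_pow_right₀ (by linarith) hk
  have h1 : (0:ℝ) < q ^ k - 1 := by linarith
  have h2 : (-1:ℝ) ≤ (-1:ℝ) ^ k := by
    rcases Nat.even_or_odd k with h | h
    · rw [h.neg_one_pow]; norm_num
    · rw [h.neg_one_pow]
  rw [Ff, div_le_iff₀ h1]
  have hx : (0:ℝ) < q ^ k := by linarith
  have key : (32/15:ℝ) / q ^ k * q ^ k = 32/15 := div_mul_cancel₀ _ (ne_of_gt hx)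
  have hnn : (0:ℝ) ≤ (32/15:ℝ) / q ^ k := by positivity
  nlinarith [key, hnn, h16, h2]

/-- tail bound: product of `Ff q (m+i)` over `i < k` is at most `1 + 6/q^m`, for `m ≥ 4`. -/
lemma Ff_tail {q : ℝ} (hq : 2 ≤ q) : ∀ k m : ℕ, 4 ≤ m →
    ∏ i ∈ range k, Ff q (m + i) ≤ 1 + 6 / q ^ m := by
  intro k
  induction k with
  | zero => intro m hm; simp; positivity
  | succ k ih =>
    intro m hm
    have h16 : (16:ℝ) ≤ q ^ m := by
      calc (16:ℝ) = 2 ^ 4 := by norm_num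
      _ ≤ q ^ 4 := by gcongr
      _ ≤ q ^ m := by apply pow_le_pow_right₀ (by linarith) hm
    have hx : (0:ℝ) < q ^ m := by linarith
    rw [Finset.prod_range_succ']
    have e1 : ∀ i ∈ range k, Ff q (m + (i + 1)) = Ff q ((m+1) + i) := by
      intro i _; congr 1; omega
    rw [Finset.prod_congr rfl e1]
    have h1 : ∏ i ∈ range k, Ff q ((m+1) + i) ≤ 1 + 6 / q ^ (m+1) := ih (m+1) (by omega)
    have h1' : (1:ℝ) + 6 / q ^ (m+1) ≤ 1 + 3 / q ^ m := by
      have : q ^ (m+1) = q ^ m * q := pow_succ q m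
      rw [this]
      have : (0:ℝ) < q ^ m * q := by positivity
      gcongr 1 + ?_
      rw [div_le_div_iff₀ this hx]
      nlinarith
    have h2 : Ff q (m + 0) ≤ 1 + (32/15) / q ^ m := by
      simpa using Ff_le hq (k := m) (by omega)
    have hp : (0:ℝ) ≤ ∏ i ∈ range k, Ff q ((m+1) + i) := by
      apply Finset.prod_nonneg; intro i _
      have := Ff_one_le hq (k := (m+1)+i) (by omega); linarith
    have h3 : (0:ℝ) ≤ Ff q (m + 0) := by
      have := Ff_one_le hq (k := m + 0) (by omega); linarith
    calc (∏ i ∈ range k, Ff q ((m+1)+i)) * Ff q (m + 0)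
        ≤ (1 + 3 / q ^ m) * (1 + (32/15) / q ^ m) := by
          apply mul_le_mul (le_trans h1 h1') h2 h3 (by positivity)
      _ ≤ 1 + 6 / q ^ m := by
          have hy : (0:ℝ) < q ^ m := hx
          have h16' : (1:ℝ)/ q^m ≤ 1/16 := by
            rw [div_le_div_iff₀ hy (by norm_num)]; linarith
          set x := (1:ℝ) / q ^ m with hxdef
          have hx0 : 0 < x := by positivity
          have e : (3:ℝ)/q^m = 3*x := by rw [hxdef]; ring
          have e2 : (32/15:ℝ)/q^m = (32/15)*x := by rw [hxdef]; ring
          have e3 : (6:ℝ)/q^m = 6*x := by rw [hxdef]; ring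
          rw [e, e2, e3]
          nlinarith

lemma Ff_two {q : ℝ} (hq : 2 ≤ q) : Ff q 2 = 1 := Ff_even hq (by norm_num) (by decide)
lemma Ff_four {q : ℝ} (hq : 2 ≤ q) : Ff q 4 = 1 := Ff_even hq (by norm_num) (by decide)

lemma Ff_pos {q : ℝ} (hq : 2 ≤ q) {k : ℕ} (hk : 1 ≤ k) : 0 < Ff q k :=
  lt_of_lt_of_le one_pos (Ff_one_le hq hk)

lemma one_add_pos {q : ℝ} (hq : 2 ≤ q) : (0:ℝ) < 1 + 6 / q ^ 5 := by positivity

lemma lhs_le_F13 {q : ℝ} (hq : 2 ≤ q) {n : ℕ} (hn : n ≤ 4) :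
    ∏ i ∈ range n, Ff q (i+1) ≤ Ff q 1 * Ff q 3 := by
  have h1 := Ff_one_le hq (k := 1) (by norm_num)
  have h3 := Ff_one_le hq (k := 3) (by norm_num)
  interval_cases n <;>
    simp [Finset.prod_range_succ, Ff_two hq, Ff_four hq] <;> nlinarith

lemma lhs_bound {q : ℝ} (hq : 2 ≤ q) (n : ℕ) :
    ∏ i ∈ range n, Ff q (i+1) ≤ Ff q 1 * Ff q 3 * (1 + 6 / q ^ 5) := by
  have h1 := Ff_one_le hq (k := 1) (by norm_num)
  have h3 := Ff_one_le hq (k := 3) (by norm_num)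
  have h6 : (1:ℝ) ≤ 1 + 6 / q ^ 5 := by
    have : (0:ℝ) < q ^ 5 := by positivity
    have : (0:ℝ) ≤ 6 / q ^ 5 := by positivity
    linarith
  rcases le_or_gt n 4 with hn | hn
  · calc ∏ i ∈ range n, Ff q (i+1) ≤ Ff q 1 * Ff q 3 := lhs_le_F13 hq hn
    _ ≤ Ff q 1 * Ff q 3 * (1 + 6 / q ^ 5) :=
        le_mul_of_one_le_right (by nlinarith) h6
  · obtain ⟨k, rfl⟩ : ∃ k, n = 4 + k := ⟨n - 4, by omega⟩
    rw [Finset.prod_range_add]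
    have e1 : ∀ i ∈ range k, Ff q (4 + i + 1) = Ff q (5 + i) := by
      intro i _; congr 1; omega
    rw [Finset.prod_congr rfl e1]
    have htail : ∏ i ∈ range k, Ff q (5 + i) ≤ 1 + 6 / q ^ 5 := Ff_tail hq k 5 (by norm_num)
    have hhead : ∏ i ∈ range 4, Ff q (i+1) = Ff q 1 * Ff q 3 := by
      simp [Finset.prod_range_succ, Ff_two hq, Ff_four hq]
    rw [hhead]
    have hp : (0:ℝ) ≤ ∏ i ∈ range k, Ff q (5 + i) := by
      apply Finset.prod_nonneg; intro i _
      have := Ff_one_le hq (k := 5 + i) (by omega); linarith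
    have : (0:ℝ) < Ff q 1 * Ff q 3 := by nlinarith
    nlinarith [htail, hp]

lemma F3_mul_le_F1 {q : ℝ} (hq : 2 ≤ q) : Ff q 3 * (1 + 6 / q ^ 5) ≤ Ff q 1 := by
  have hq0 : (0:ℝ) ≤ q := by linarith
  have hq5 : (0:ℝ) < q ^ 5 := by positivity
  have h8 : (8:ℝ) ≤ q ^ 3 := by calc (8:ℝ) = 2 ^ 3 := by norm_num
                                  _ ≤ q ^ 3 := by gcongr
  have h3 : (0:ℝ) < q ^ 3 - 1 := by linarith
  have h1 : (0:ℝ) < q - 1 := by linarith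
  have e : (1:ℝ) + 6 / q ^ 5 = (q ^ 5 + 6) / q ^ 5 := by field_simp
  rw [Ff, Ff, e, div_mul_div_comm]
  norm_num
  rw [div_le_div_iff₀ (by positivity) h1]
  have h2q : (4:ℝ) ≤ q ^ 2 := by nlinarith
  have h1p : (0:ℝ) ≤ q ^ 6 * (q ^ 2 - 4) := mul_nonneg (by positivity) (by linarith)
  have h2p : (0:ℝ) ≤ q ^ 4 * (q ^ 2 - 1) := mul_nonneg (by positivity) (by nlinarith)
  have h3p : (0:ℝ) ≤ q * (q ^ 2 - 1) := mul_nonneg hq0 (by nlinarith)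
  nlinarith [h1p, h2p, h3p]

lemma one_add_le_F3 {q : ℝ} (hq : 2 ≤ q) : 1 + 6 / q ^ 5 ≤ Ff q 3 := by
  have hq5 : (0:ℝ) < q ^ 5 := by positivity
  have h8 : (8:ℝ) ≤ q ^ 3 := by calc (8:ℝ) = 2 ^ 3 := by norm_num
                                  _ ≤ q ^ 3 := by gcongr
  have h3 : (0:ℝ) < q ^ 3 - 1 := by linarith
  have e : (1:ℝ) + 6 / q ^ 5 = (q ^ 5 + 6) / q ^ 5 := by field_simp
  rw [Ff, e]
  norm_num
  rw [div_le_div_iff₀ hq5 h3]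
  have h2q : (4:ℝ) ≤ q ^ 2 := by nlinarith
  have hp3 : (0:ℝ) ≤ q ^ 3 * (q ^ 2 - 3) := mul_nonneg (by positivity) (by linarith)
  nlinarith [hp3]




lemma one_le_hookLength {Y : YoungDiagram} {c : ℕ × ℕ} (h : c ∈ Y.cells) :
    1 ≤ hookLength Y c := by
  rw [hookLength, Nat.one_le_iff_ne_zero, ← Nat.pos_iff_ne_zero, Finset.card_pos]
  exact ⟨c, Finset.mem_filter.mpr ⟨h, le_refl _, le_refl _, Or.inl rfl⟩⟩

lemma hook_card {Y : YoungDiagram} {i j : ℕ} (h : (i, j) ∈ Y) :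
    hookLength Y (i, j) + (i + j + 1) = Y.rowLen i + Y.colLen j := by
  have hR : j < Y.rowLen i := YoungDiagram.mem_iff_lt_rowLen.mp h
  have hC : i < Y.colLen j := YoungDiagram.mem_iff_lt_colLen.mp h
  have key : (Y.cells.filter fun d => (i,j).1 ≤ d.1 ∧ (i,j).2 ≤ d.2 ∧
        (d.1 = (i,j).1 ∨ d.2 = (i,j).2)) =
      ({i} ×ˢ Finset.Ico j (Y.rowLen i)) ∪ (Finset.Ico i (Y.colLen j) ×ˢ {j}) := by
    ext ⟨x, y⟩
    simp only [Finset.mem_filter, Finset.mem_union, Finset.mem_product, Finset.mem_Ico,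
      Finset.mem_singleton, YoungDiagram.mem_cells]
    constructor
    · rintro ⟨hmem, hix, hjy, (rfl | rfl)⟩
      · exact Or.inl ⟨rfl, hjy, YoungDiagram.mem_iff_lt_rowLen.mp hmem⟩
      · exact Or.inr ⟨⟨hix, YoungDiagram.mem_iff_lt_colLen.mp hmem⟩, rfl⟩
    · rintro (⟨rfl, hjy, hy⟩ | ⟨⟨hix, hx⟩, rfl⟩)
      · exact ⟨YoungDiagram.mem_iff_lt_rowLen.mpr hy, le_refl _, hjy, Or.inl rfl⟩
      · exact ⟨YoungDiagram.mem_iff_lt_colLen.mpr hx, hix, le_refl _, Or.inr rfl⟩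
  have hint : (({i} ×ˢ Finset.Ico j (Y.rowLen i)) ∩ (Finset.Ico i (Y.colLen j) ×ˢ {j}))
      = {(i, j)} := by
    ext ⟨x, y⟩
    simp only [Finset.mem_inter, Finset.mem_product, Finset.mem_Ico, Finset.mem_singleton,
      Prod.mk.injEq]
    omega
  have hcard := Finset.card_union_add_card_inter
    ({i} ×ˢ Finset.Ico j (Y.rowLen i)) (Finset.Ico i (Y.colLen j) ×ˢ {j})
  rw [hint] at hcard
  rw [hookLength, key]
  simp only [Finset.card_singleton, Finset.card_product, Nat.card_Ico] at hcard ⊢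
  omega

lemma corner_row {Y : YoungDiagram} (h00 : (0, 0) ∈ Y) :
    (Y.colLen 0 - 1, Y.rowLen (Y.colLen 0 - 1) - 1) ∈ Y ∧
    hookLength Y (Y.colLen 0 - 1, Y.rowLen (Y.colLen 0 - 1) - 1) = 1 := by
  set r := Y.colLen 0 with hr
  have hr0 : 0 < r := YoungDiagram.mem_iff_lt_colLen.mp h00
  have hrow0 : (r - 1, 0) ∈ Y := YoungDiagram.mem_iff_lt_colLen.mpr (by omega)
  set a' := Y.rowLen (r - 1) with ha'
  have ha0 : 0 < a' := YoungDiagram.mem_iff_lt_rowLen.mp hrow0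
  have hmem : (r - 1, a' - 1) ∈ Y := YoungDiagram.mem_iff_lt_rowLen.mpr (by omega)
  refine ⟨hmem, ?_⟩
  have hcol : Y.colLen (a' - 1) = r := by
    have h1 : Y.colLen (a' - 1) ≤ r := Y.colLen_anti 0 (a' - 1) (by omega)
    have h2 : r - 1 < Y.colLen (a' - 1) := YoungDiagram.mem_iff_lt_colLen.mp hmem
    omega
  have := hook_card hmem
  rw [hcol, ← ha'] at this
  omega

lemma corner_col {Y : YoungDiagram} (h00 : (0, 0) ∈ Y) :
    (Y.colLen (Y.rowLen 0 - 1) - 1, Y.rowLen 0 - 1) ∈ Y ∧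
    hookLength Y (Y.colLen (Y.rowLen 0 - 1) - 1, Y.rowLen 0 - 1) = 1 := by
  set a := Y.rowLen 0 with ha
  have ha0 : 0 < a := YoungDiagram.mem_iff_lt_rowLen.mp h00
  have hcol0 : (0, a - 1) ∈ Y := YoungDiagram.mem_iff_lt_rowLen.mpr (by omega)
  set r' := Y.colLen (a - 1) with hr'
  have hr0 : 0 < r' := YoungDiagram.mem_iff_lt_colLen.mp hcol0
  have hmem : (r' - 1, a - 1) ∈ Y := YoungDiagram.mem_iff_lt_colLen.mpr (by omega)
  refine ⟨hmem, ?_⟩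
  have hrow : Y.rowLen (r' - 1) = a := by
    have h1 : Y.rowLen (r' - 1) ≤ a := Y.rowLen_anti 0 (r' - 1) (by omega)
    have h2 : a - 1 < Y.rowLen (r' - 1) := YoungDiagram.mem_iff_lt_rowLen.mp hmem
    omega
  have := hook_card hmem
  rw [hrow, ← hr'] at this
  omega







/-- lower bound for the RHS by a product over a subset of cells. -/
lemma rhs_ge {q : ℝ} (hq : 2 ≤ q) {Y : YoungDiagram} {S : Finset (ℕ × ℕ)}
    (hS : S ⊆ Y.cells) :
    ∏ c ∈ S, Ff q (hookLength Y c) ≤ ∏ c ∈ Y.cells, Ff q (hookLength Y c) := by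
  have h1 : (1:ℝ) ≤ ∏ c ∈ Y.cells \ S, Ff q (hookLength Y c) := by
    calc (1:ℝ) = ∏ c ∈ Y.cells \ S, 1 := (Finset.prod_const_one).symm
    _ ≤ _ := Finset.prod_le_prod (fun i _ => by norm_num)
        (fun i hi => Ff_one_le hq (one_le_hookLength (Finset.mem_sdiff.mp hi).1))
  have h0 : (0:ℝ) ≤ ∏ c ∈ S, Ff q (hookLength Y c) := by
    apply Finset.prod_nonneg
    intro c hc
    have := Ff_one_le hq (one_le_hookLength (hS hc)); linarith
  rw [← Finset.prod_sdiff hS]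
  exact le_mul_of_one_le_left h0 h1

lemma key {q : ℝ} (hq : 2 ≤ q) (Y : YoungDiagram) :
    ∏ i ∈ range Y.card, Ff q (i+1) ≤ ∏ c ∈ Y.cells, Ff q (hookLength Y c) := by
  rcases Nat.eq_zero_or_pos Y.card with hn | hn
  · rw [hn]
    have : Y.cells = ∅ := Finset.card_eq_zero.mp hn
    rw [this]
    simp
  -- Y is nonempty, so (0,0) ∈ Y
  have h00 : (0, 0) ∈ Y := by
    obtain ⟨c, hc⟩ := Finset.card_pos.mp hn
    exact Y.up_left_mem (Nat.zero_le _) (Nat.zero_le _) (Y.mem_cells c |>.mp hc)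
  set r := Y.colLen 0 with hrdef
  set a := Y.rowLen 0 with hadef
  have hr0 : 0 < r := YoungDiagram.mem_iff_lt_colLen.mp h00
  have ha0 : 0 < a := YoungDiagram.mem_iff_lt_rowLen.mp h00
  have hF1 := Ff_one_le hq (k := 1) (by norm_num)
  have hF3 := Ff_one_le hq (k := 3) (by norm_num)
  have h6 : (0:ℝ) < 1 + 6 / q ^ 5 := by positivity
  -- single row case
  rcases eq_or_lt_of_le (Nat.succ_le_of_lt hr0) with hr1 | hr2
  · -- r = 1
    have hr1 : r = 1 := hr1.symm
    have hcells : Y.cells = {0} ×ˢ range a := by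
      ext ⟨x, y⟩
      simp only [YoungDiagram.mem_cells, Finset.mem_product, Finset.mem_singleton,
        Finset.mem_range]
      constructor
      · intro h
        have hx : x < Y.colLen y := YoungDiagram.mem_iff_lt_colLen.mp h
        have : Y.colLen y ≤ r := Y.colLen_anti 0 y (Nat.zero_le _)
        have hy : y < Y.rowLen x := YoungDiagram.mem_iff_lt_rowLen.mp h
        have hx0 : x = 0 := by omega
        subst hx0
        exact ⟨rfl, hy⟩
      · rintro ⟨rfl, hy⟩
        exact YoungDiagram.mem_iff_lt_rowLen.mpr hy
    have hcard : Y.card = a := by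
      show Y.cells.card = a
      rw [hcells]; simp
    have hhook : ∀ y < a, hookLength Y (0, y) = a - y := by
      intro y hy
      have hmem : (0, y) ∈ Y := YoungDiagram.mem_iff_lt_rowLen.mpr hy
      have hcol : Y.colLen y = 1 := by
        have h1 : Y.colLen y ≤ r := Y.colLen_anti 0 y (Nat.zero_le _)
        have h2 : 0 < Y.colLen y := YoungDiagram.mem_iff_lt_colLen.mp hmem
        omega
      have := hook_card hmem
      rw [hcol] at this
      omega
    have heq : ∏ y ∈ range a, Ff q (hookLength Y (0, y)) = ∏ i ∈ range a, Ff q (i+1) := by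
      calc ∏ y ∈ range a, Ff q (hookLength Y (0, y))
          = ∏ y ∈ range a, Ff q ((a - 1 - y) + 1) := by
            apply Finset.prod_congr rfl
            intro y hy
            have hya := Finset.mem_range.mp hy
            rw [hhook y hya]
            congr 1
            omega
        _ = ∏ i ∈ range a, Ff q (i+1) :=
            Finset.prod_range_reflect (fun y => Ff q (y + 1)) a
    rw [hcard, hcells, Finset.prod_product, Finset.prod_singleton, heq]
  rcases eq_or_lt_of_le (Nat.succ_le_of_lt ha0) with ha1 | ha2
  · -- a = 1 : single column
    have ha1 : a = 1 := ha1.symm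
    have hcells : Y.cells = range r ×ˢ {0} := by
      ext ⟨x, y⟩
      simp only [YoungDiagram.mem_cells, Finset.mem_product, Finset.mem_singleton,
        Finset.mem_range]
      constructor
      · intro h
        have hy : y < Y.rowLen x := YoungDiagram.mem_iff_lt_rowLen.mp h
        have : Y.rowLen x ≤ a := Y.rowLen_anti 0 x (Nat.zero_le _)
        have hx : x < Y.colLen y := YoungDiagram.mem_iff_lt_colLen.mp h
        have hy0 : y = 0 := by omega
        subst hy0
        exact ⟨hx, rfl⟩
      · rintro ⟨hx, rfl⟩
        exact YoungDiagram.mem_iff_lt_colLen.mpr hx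
    have hcard : Y.card = r := by
      show Y.cells.card = r
      rw [hcells]; simp
    have hhook : ∀ x < r, hookLength Y (x, 0) = r - x := by
      intro x hx
      have hmem : (x, 0) ∈ Y := YoungDiagram.mem_iff_lt_colLen.mpr hx
      have hrow : Y.rowLen x = 1 := by
        have h1 : Y.rowLen x ≤ a := Y.rowLen_anti 0 x (Nat.zero_le _)
        have h2 : 0 < Y.rowLen x := YoungDiagram.mem_iff_lt_rowLen.mp hmem
        omega
      have := hook_card hmem
      rw [hrow] at this
      omega
    have heq : ∏ x ∈ range r, Ff q (hookLength Y (x, 0)) = ∏ i ∈ range r, Ff q (i+1) := by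
      calc ∏ x ∈ range r, Ff q (hookLength Y (x, 0))
          = ∏ x ∈ range r, Ff q ((r - 1 - x) + 1) := by
            apply Finset.prod_congr rfl
            intro x hx
            have hxr := Finset.mem_range.mp hx
            rw [hhook x hxr]
            congr 1
            omega
        _ = ∏ i ∈ range r, Ff q (i+1) :=
            Finset.prod_range_reflect (fun x => Ff q (x + 1)) r
    rw [hcard, hcells, Finset.prod_product]
    simp only [Finset.prod_singleton]
    rw [heq]
  -- now r ≥ 2 and a ≥ 2
  obtain ⟨hc1mem, hc1hook⟩ := corner_row h00
  obtain ⟨hc2mem, hc2hook⟩ := corner_col h00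
  rw [← hrdef] at hc1mem hc1hook
  rw [← hadef] at hc2mem hc2hook
  have hlhs := lhs_bound hq Y.card
  by_cases hcc : ((r - 1 : ℕ), Y.rowLen (r - 1) - 1) = (Y.colLen (a - 1) - 1, a - 1)
  · -- rectangle case
    have hcolpos : 0 < Y.colLen (a - 1) :=
      YoungDiagram.mem_iff_lt_colLen.mp (YoungDiagram.mem_iff_lt_rowLen.mpr (by omega))
    have hrowpos : 0 < Y.rowLen (r - 1) :=
      YoungDiagram.mem_iff_lt_rowLen.mp (YoungDiagram.mem_iff_lt_colLen.mpr (by omega))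
    obtain ⟨he1, he2⟩ := Prod.mk.injEq .. ▸ hcc
    rw [Prod.mk.injEq] at hcc
    have hca : Y.colLen (a - 1) = r := by omega
    have hra : Y.rowLen (r - 1) = a := by omega
    have hrowLen : ∀ i, i < r → Y.rowLen i = a := by
      intro i hi
      have h1 : Y.rowLen i ≤ a := hadef ▸ Y.rowLen_anti 0 i (Nat.zero_le _)
      have h2 : a ≤ Y.rowLen i := hra ▸ Y.rowLen_anti i (r - 1) (by omega)
      omega
    have hcolLen : ∀ j, j < a → Y.colLen j = r := by
      intro j hj
      have h1 : Y.colLen j ≤ r := hrdef ▸ Y.colLen_anti 0 j (Nat.zero_le _)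
      have h2 : r ≤ Y.colLen j := hca ▸ Y.colLen_anti j (a - 1) (by omega)
      omega
    have hmemiff : ∀ x y : ℕ, (x, y) ∈ Y ↔ x < r ∧ y < a := by
      intro x y
      constructor
      · intro h
        have hy : y < Y.rowLen x := YoungDiagram.mem_iff_lt_rowLen.mp h
        have hy' : Y.rowLen x ≤ a := hadef ▸ Y.rowLen_anti 0 x (Nat.zero_le _)
        have hx : x < Y.colLen y := YoungDiagram.mem_iff_lt_colLen.mp h
        have hx' : Y.colLen y ≤ r := hrdef ▸ Y.colLen_anti 0 y (Nat.zero_le _)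
        omega
      · rintro ⟨hx, hy⟩
        exact YoungDiagram.mem_iff_lt_rowLen.mpr (by rw [hrowLen x hx]; exact hy)
    have hhook : ∀ x y : ℕ, x < r → y < a →
        hookLength Y (x, y) = (r - x) + (a - y) - 1 := by
      intro x y hx hy
      have hmem : (x, y) ∈ Y := (hmemiff x y).mpr ⟨hx, hy⟩
      have := hook_card hmem
      rw [hrowLen x hx, hcolLen y hy] at this
      omega
    have hcells : Y.cells = range r ×ˢ range a := by
      ext ⟨x, y⟩
      simp only [YoungDiagram.mem_cells, Finset.mem_product, Finset.mem_range]
      exact hmemiff x y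
    have hcard : Y.card = r * a := by
      show Y.cells.card = r * a
      rw [hcells, Finset.card_product, Finset.card_range, Finset.card_range]
    by_cases hsmall : r = 2 ∧ a = 2
    · -- 2 × 2 square
      obtain ⟨hr2, ha2⟩ := hsmall
      have hlhs4 : ∏ i ∈ range Y.card, Ff q (i+1) = Ff q 1 * Ff q 3 := by
        rw [hcard, hr2, ha2]
        norm_num [Finset.prod_range_succ, Ff_two hq, Ff_four hq]
      have hsub : ({((0:ℕ),(0:ℕ)), ((1:ℕ),(1:ℕ))} : Finset (ℕ × ℕ)) ⊆ Y.cells := by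
        intro c hc
        simp only [Finset.mem_insert, Finset.mem_singleton] at hc
        rcases hc with rfl | rfl <;>
          · rw [YoungDiagram.mem_cells, hmemiff] ; omega
      have hprod : ∏ c ∈ ({((0:ℕ),(0:ℕ)), ((1:ℕ),(1:ℕ))} : Finset (ℕ × ℕ)),
          Ff q (hookLength Y c) = Ff q 3 * Ff q 1 := by
        have e1 : hookLength Y (0, 0) = 3 := by
          rw [hhook 0 0 (by omega) (by omega)]; omega
        have e2 : hookLength Y (1, 1) = 1 := by
          rw [hhook 1 1 (by omega) (by omega)]; omega
        rw [Finset.prod_pair (by simp), e1, e2]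
      calc ∏ i ∈ range Y.card, Ff q (i+1) = Ff q 1 * Ff q 3 := hlhs4
        _ = Ff q 3 * Ff q 1 := by ring
        _ = _ := hprod.symm
        _ ≤ _ := rhs_ge hq hsub
    · have h3 : 3 ≤ a ∨ 3 ≤ r := by omega
      have hF33 : Ff q 1 * Ff q 3 * (1 + 6 / q ^ 5) ≤ Ff q 1 * Ff q 3 * Ff q 3 := by
        have := one_add_le_F3 hq
        have h13 : (0:ℝ) ≤ Ff q 1 * Ff q 3 := by nlinarith
        nlinarith
      rcases h3 with h3a | h3r
      · -- a ≥ 3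
        set S : Finset (ℕ × ℕ) := {(r-1, a-1), (r-2, a-2), (r-1, a-3)} with hS
        have hne1 : ((r-1 : ℕ), (a-1 : ℕ)) ∉ ({(r-2, a-2), (r-1, a-3)} : Finset (ℕ × ℕ)) := by
          simp only [Finset.mem_insert, Finset.mem_singleton, Prod.mk.injEq]
          omega
        have hne2 : ((r-2 : ℕ), (a-2 : ℕ)) ≠ ((r-1 : ℕ), (a-3 : ℕ)) := by
          simp only [ne_eq, Prod.mk.injEq]
          omega
        have hsub : S ⊆ Y.cells := by
          intro c hc
          simp only [hS, Finset.mem_insert, Finset.mem_singleton] at hc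
          rcases hc with rfl | rfl | rfl <;>
            · rw [YoungDiagram.mem_cells, hmemiff]; omega
        have hprod : ∏ c ∈ S, Ff q (hookLength Y c) = Ff q 1 * (Ff q 3 * Ff q 3) := by
          have e1 : hookLength Y (r-1, a-1) = 1 := by
            rw [hhook (r-1) (a-1) (by omega) (by omega)]; omega
          have e2 : hookLength Y (r-2, a-2) = 3 := by
            rw [hhook (r-2) (a-2) (by omega) (by omega)]; omega
          have e3 : hookLength Y (r-1, a-3) = 3 := by
            rw [hhook (r-1) (a-3) (by omega) (by omega)]; omega
          rw [hS, Finset.prod_insert hne1, Finset.prod_pair hne2, e1, e2, e3]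
        calc ∏ i ∈ range Y.card, Ff q (i+1)
            ≤ Ff q 1 * Ff q 3 * (1 + 6 / q ^ 5) := hlhs
          _ ≤ Ff q 1 * Ff q 3 * Ff q 3 := hF33
          _ = ∏ c ∈ S, Ff q (hookLength Y c) := by rw [hprod]; ring
          _ ≤ _ := rhs_ge hq hsub
      · -- r ≥ 3
        set S : Finset (ℕ × ℕ) := {(r-1, a-1), (r-2, a-2), (r-3, a-1)} with hS
        have hne1 : ((r-1 : ℕ), (a-1 : ℕ)) ∉ ({(r-2, a-2), (r-3, a-1)} : Finset (ℕ × ℕ)) := by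
          simp only [Finset.mem_insert, Finset.mem_singleton, Prod.mk.injEq]
          omega
        have hne2 : ((r-2 : ℕ), (a-2 : ℕ)) ≠ ((r-3 : ℕ), (a-1 : ℕ)) := by
          simp only [ne_eq, Prod.mk.injEq]
          omega
        have hsub : S ⊆ Y.cells := by
          intro c hc
          simp only [hS, Finset.mem_insert, Finset.mem_singleton] at hc
          rcases hc with rfl | rfl | rfl <;>
            · rw [YoungDiagram.mem_cells, hmemiff]; omega
        have hprod : ∏ c ∈ S, Ff q (hookLength Y c) = Ff q 1 * (Ff q 3 * Ff q 3) := by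
          have e1 : hookLength Y (r-1, a-1) = 1 := by
            rw [hhook (r-1) (a-1) (by omega) (by omega)]; omega
          have e2 : hookLength Y (r-2, a-2) = 3 := by
            rw [hhook (r-2) (a-2) (by omega) (by omega)]; omega
          have e3 : hookLength Y (r-3, a-1) = 3 := by
            rw [hhook (r-3) (a-1) (by omega) (by omega)]; omega
          rw [hS, Finset.prod_insert hne1, Finset.prod_pair hne2, e1, e2, e3]
        calc ∏ i ∈ range Y.card, Ff q (i+1)
            ≤ Ff q 1 * Ff q 3 * (1 + 6 / q ^ 5) := hlhs
          _ ≤ Ff q 1 * Ff q 3 * Ff q 3 := hF33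
          _ = ∏ c ∈ S, Ff q (hookLength Y c) := by rw [hprod]; ring
          _ ≤ _ := rhs_ge hq hsub
  · -- two distinct corners
    set c1 : ℕ × ℕ := (r - 1, Y.rowLen (r - 1) - 1) with hc1
    set c2 : ℕ × ℕ := (Y.colLen (a - 1) - 1, a - 1) with hc2
    have hsub : ({c1, c2} : Finset (ℕ × ℕ)) ⊆ Y.cells := by
      intro c hc
      simp only [Finset.mem_insert, Finset.mem_singleton] at hc
      rcases hc with rfl | rfl
      · exact (Y.mem_cells c1).mpr hc1mem
      · exact (Y.mem_cells c2).mpr hc2mem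
    have hprod : ∏ c ∈ ({c1, c2} : Finset (ℕ × ℕ)), Ff q (hookLength Y c)
        = Ff q 1 * Ff q 1 := by
      rw [Finset.prod_pair hcc, hc1hook, hc2hook]
    calc ∏ i ∈ range Y.card, Ff q (i+1)
        ≤ Ff q 1 * Ff q 3 * (1 + 6 / q ^ 5) := hlhs
      _ = Ff q 1 * (Ff q 3 * (1 + 6 / q ^ 5)) := by ring
      _ ≤ Ff q 1 * Ff q 1 := by
          have := F3_mul_le_F1 hq
          nlinarith
      _ = ∏ c ∈ ({c1, c2} : Finset (ℕ × ℕ)), Ff q (hookLength Y c) := hprod.symm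
      _ ≤ _ := rhs_ge hq hsub









theorem stmt10 (q : ℤ) (hq : 2 ≤ q) (Y : YoungDiagram) :
    Dqminus Y (q : ℝ) ≤ Dq Y (q : ℝ) := by
  set Q : ℝ := (q : ℝ) with hQdef
  have hQ : (2:ℝ) ≤ Q := by rw [hQdef]; exact_mod_cast hq
  have hQ0 : (0:ℝ) < Q := by linarith
  have habs : ∀ k : ℕ, 1 ≤ k → |(-Q) ^ k - 1| = Ff Q k * (Q ^ k - 1) := by
    intro k hk
    have h1 : (1:ℝ) < Q ^ k := one_lt_qpow hQ hk
    have hne : Q ^ k - 1 ≠ 0 := by linarith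
    have e : Ff Q k * (Q ^ k - 1) = Q ^ k - (-1) ^ k := div_mul_cancel₀ _ hne
    rw [e, neg_pow]
    rcases Nat.even_or_odd k with h | h
    · rw [h.neg_one_pow, one_mul]
      rw [abs_of_pos (by linarith)]
    · rw [h.neg_one_pow]
      have : (-1:ℝ) * Q ^ k - 1 = -(Q ^ k + 1) := by ring
      rw [this, abs_neg, abs_of_pos (by linarith)]
      ring
  set n := Y.card with hndef
  set N : ℝ := ∏ i ∈ range n, (Q ^ (i+1) - 1) with hNdef
  set P : ℝ := ∏ c ∈ Y.cells, (Q ^ hookLength Y c - 1) with hPdef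
  set LF : ℝ := ∏ i ∈ range n, Ff Q (i+1) with hLFdef
  set RF : ℝ := ∏ c ∈ Y.cells, Ff Q (hookLength Y c) with hRFdef
  have hNpos : 0 < N := by
    apply Finset.prod_pos
    intro i _
    have := one_lt_qpow hQ (k := i+1) (by omega)
    linarith
  have hPpos : 0 < P := by
    apply Finset.prod_pos
    intro c hc
    have := one_lt_qpow hQ (one_le_hookLength hc)
    linarith
  have hLF0 : 0 ≤ LF := by
    apply Finset.prod_nonneg
    intro i _
    have := Ff_one_le hQ (k := i+1) (by omega)
    linarith
  have hRF1 : (1:ℝ) ≤ RF := by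
    calc (1:ℝ) = ∏ c ∈ Y.cells, 1 := (Finset.prod_const_one).symm
    _ ≤ RF := Finset.prod_le_prod (fun c _ => by norm_num)
        (fun c hc => Ff_one_le hQ (one_le_hookLength hc))
  have hkey : LF ≤ RF := key hQ Y
  have eN : ∏ i ∈ range n, |(-Q) ^ (i+1) - 1| = LF * N := by
    rw [hLFdef, hNdef, ← Finset.prod_mul_distrib]
    exact Finset.prod_congr rfl fun i _ => habs (i+1) (by omega)
  have eP : ∏ c ∈ Y.cells, |(-Q) ^ hookLength Y c - 1| = RF * P := by
    rw [hRFdef, hPdef, ← Finset.prod_mul_distrib]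
    exact Finset.prod_congr rfl fun c hc => habs _ (one_le_hookLength hc)
  rw [Dqminus, Dq, abs_div, abs_mul, Finset.abs_prod, Finset.abs_prod]
  rw [← hndef, ← hNdef, ← hPdef]
  rw [abs_pow, abs_neg, abs_of_pos hQ0]
  rw [eN, eP]
  have hQa : (0:ℝ) ≤ Q ^ aStat Y := by positivity
  rw [div_le_div_iff₀ (by positivity) hPpos]
  have h' : LF * (N * P) ≤ RF * (N * P) :=
    mul_le_mul_of_nonneg_right hkey (by positivity)
  calc Q ^ aStat Y * (LF * N) * P = Q ^ aStat Y * (LF * (N * P)) := by ring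
    _ ≤ Q ^ aStat Y * (RF * (N * P)) := mul_le_mul_of_nonneg_left h' hQa
    _ = Q ^ aStat Y * N * (RF * P) := by ring
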